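/- Let Λ ⊆ R^m be a lattice (the set of integer combinations of n linearly independent vectors) and v ∈ Λ a nonzero lattice vector. Let Λ_⊥v = {u_⊥v : u ∈ Λ} be the projection of Λ orthogonal to v. Then for every i ∈ {1,…,n−1}, the i-th successive minimum satisfies λ_i(Λ_⊥v) ≤ λ_{i+1}(Λ). -/
import Mathlib


open scoped RealInnerProductSpace

noncomputable def proj {m : ℕ} (v : EuclideanSpace ℝ (Fin m)) :
    EuclideanSpace ℝ (Fin m) →ₗ[ℝ] EuclideanSpace ℝ (Fin m) where
  toFun u := u - (⟪u, v⟫ / ⟪v, v⟫) • v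
  map_add' x y := by
    simp only [inner_add_left, add_div, add_smul]; abel
  map_smul' c x := by
    simp only [real_inner_smul_left, mul_div_assoc, mul_smul, smul_sub, RingHom.id_apply]

lemma proj_apply {m : ℕ} (v u : EuclideanSpace ℝ (Fin m)) :
    proj v u = u - (⟪u, v⟫ / ⟪v, v⟫) • v := rfl

lemma proj_inner {m : ℕ} (v : EuclideanSpace ℝ (Fin m)) (hv : v ≠ 0)
    (u : EuclideanSpace ℝ (Fin m)) : ⟪proj v u, v⟫ = 0 := by
  have hvv : ⟪v, v⟫ ≠ 0 := inner_self_ne_zero.mpr hv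
  rw [proj_apply, inner_sub_left, real_inner_smul_left, div_mul_cancel₀ _ hvv, sub_self]

lemma proj_norm_le {m : ℕ} (v : EuclideanSpace ℝ (Fin m)) (hv : v ≠ 0)
    (u : EuclideanSpace ℝ (Fin m)) : ‖proj v u‖ ≤ ‖u‖ := by
  have hu : u = proj v u + (⟪u, v⟫ / ⟪v, v⟫) • v := by rw [proj_apply]; abel
  have hortho : ⟪proj v u, (⟪u, v⟫ / ⟪v, v⟫) • v⟫ = 0 := by
    rw [real_inner_smul_right, proj_inner v hv, mul_zero]
  have h2 : ‖u‖ ^ 2 = ‖proj v u‖ ^ 2 + ‖(⟪u, v⟫ / ⟪v, v⟫) • v‖ ^ 2 := by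
    calc ‖u‖ ^ 2 = ‖proj v u + (⟪u, v⟫ / ⟪v, v⟫) • v‖ ^ 2 := by rw [← hu]
      _ = _ := by rw [norm_add_sq_real, hortho]; ring
  nlinarith [norm_nonneg u, norm_nonneg (proj v u), sq_nonneg ‖(⟪u, v⟫ / ⟪v, v⟫) • v‖]

lemma ker_proj_le {m : ℕ} (v : EuclideanSpace ℝ (Fin m)) :
    LinearMap.ker (proj v) ≤ Submodule.span ℝ {v} := by
  intro u hu
  rw [LinearMap.mem_ker, proj_apply, sub_eq_zero] at hu
  rw [hu]
  exact Submodule.smul_mem _ _ (Submodule.mem_span_singleton_self v)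

lemma key {m i : ℕ} (v : EuclideanSpace ℝ (Fin m)) (hv : v ≠ 0)
    (s : Fin (i + 1) → EuclideanSpace ℝ (Fin m)) (hs : LinearIndependent ℝ s) :
    ∃ t : Fin i → EuclideanSpace ℝ (Fin m), LinearIndependent ℝ t ∧
      ∀ k, ∃ j, t k = proj v (s j) := by
  classical
  set W : Submodule ℝ (EuclideanSpace ℝ (Fin m)) := Submodule.span ℝ (Set.range s) with hW
  have hWrank : Module.finrank ℝ W = i + 1 := by
    rw [hW, finrank_span_eq_card hs, Fintype.card_fin]
  set f := (proj v).domRestrict W with hf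
  have hker : Module.finrank ℝ (LinearMap.ker f) ≤ 1 := by
    have h1 : Submodule.map W.subtype (LinearMap.ker f) ≤ Submodule.span ℝ {v} := by
      refine le_trans ?_ (ker_proj_le v)
      rintro x ⟨y, hy, rfl⟩
      simpa [hf] using hy
    calc Module.finrank ℝ (LinearMap.ker f)
        = Module.finrank ℝ (Submodule.map W.subtype (LinearMap.ker f)) :=
          (Submodule.finrank_map_subtype_eq W _).symm
      _ ≤ Module.finrank ℝ (Submodule.span ℝ {v}) := Submodule.finrank_mono h1
      _ = 1 := finrank_span_singleton hv
  have hrange : i ≤ Module.finrank ℝ (LinearMap.range f) := by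
    have := LinearMap.finrank_range_add_finrank_ker f
    omega
  have hrange_eq : LinearMap.range f = Submodule.span ℝ (proj v '' Set.range s) := by
    rw [hf, LinearMap.range_domRestrict, hW, Submodule.map_span]
  obtain ⟨t, hts, htspan, htind⟩ := exists_linearIndependent ℝ (proj v '' Set.range s)
  have htfin : t.Finite := ((Set.finite_range s).image _).subset hts
  have : Fintype t := htfin.fintype
  have hcard : i ≤ Fintype.card t := by
    have h1 : Module.finrank ℝ (Submodule.span ℝ t) = t.toFinset.card :=
      finrank_span_set_eq_card htind
    rw [htspan, ← hrange_eq] at h1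
    rw [← Set.toFinset_card]
    omega
  let e : Fin (Fintype.card t) ≃ t := (Fintype.equivFin t).symm
  refine ⟨fun k => (e (Fin.castLE hcard k) : _), ?_, ?_⟩
  · exact htind.comp _ (e.injective.comp (Fin.castLE_injective hcard))
  · intro k
    have : ((e (Fin.castLE hcard k)) : EuclideanSpace ℝ (Fin m)) ∈ proj v '' Set.range s :=
      hts (e (Fin.castLE hcard k)).2
    obtain ⟨u, ⟨j, rfl⟩, hu⟩ := this
    exact ⟨j, hu.symm⟩

/-- The `i`-th successive minimum of a set `L`: the infimum of radii `r` such that the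
closed ball of radius `r` contains at least `i` linearly independent vectors of `L`. -/
noncomputable def succMin {m : ℕ} (L : Set (EuclideanSpace ℝ (Fin m))) (i : ℕ) : ℝ :=
  sInf {r : ℝ | ∃ s : Fin i → EuclideanSpace ℝ (Fin m),
    (∀ k, s k ∈ L) ∧ LinearIndependent ℝ s ∧ ∀ k, ‖s k‖ ≤ r}

theorem succMin_projected_lattice_le {m n : ℕ} (b : Fin n → EuclideanSpace ℝ (Fin m))
    (hb : LinearIndependent ℝ b)
    (L : Set (EuclideanSpace ℝ (Fin m)))
    (hL : L = (Submodule.span ℤ (Set.range b) : Submodule ℤ (EuclideanSpace ℝ (Fin m))))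
    (v : EuclideanSpace ℝ (Fin m)) (hvL : v ∈ L) (hv : v ≠ 0) :
    ∀ i ∈ Finset.Icc 1 (n - 1),
      succMin ((fun u => u - (⟪u, v⟫ / ⟪v, v⟫) • v) '' L) i ≤ succMin L (i + 1) := by
  intro i hi
  rw [Finset.mem_Icc] at hi
  have hin : i + 1 ≤ n := by omega
  unfold succMin
  apply csInf_le_csInf
  · refine ⟨0, fun r hr => ?_⟩
    obtain ⟨s, _, _, hnorm⟩ := hr
    exact le_trans (norm_nonneg (s ⟨0, by omega⟩)) (hnorm _)
  · obtain ⟨M, hM⟩ : ∃ M, ∀ k : Fin (i + 1), ‖b (Fin.castLE hin k)‖ ≤ M :=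
      Finite.exists_le _
    refine ⟨M, b ∘ Fin.castLE hin, fun k => ?_, hb.comp _ (Fin.castLE_injective hin), hM⟩
    rw [hL]
    exact Submodule.subset_span ⟨_, rfl⟩
  · rintro r ⟨s, hsL, hsind, hsnorm⟩
    obtain ⟨t, htind, ht⟩ := key v hv s hsind
    refine ⟨t, fun k => ?_, htind, fun k => ?_⟩
    · obtain ⟨j, hj⟩ := ht k
      exact ⟨s j, hsL j, by rw [hj]; rfl⟩
    · obtain ⟨j, hj⟩ := ht k
      rw [hj]
      exact (proj_norm_le v hv _).trans (hsnorm j)
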